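/- arXiv:1012.5024 — 2 statements merged into one kernel-verified Lean document; each statement's English description precedes it below -/
import Mathlib

section
/- In the 3-SAT reduction graph, every path from s to t must, for each variable x_j, traverse exactly one of the two branches (positive or negative) of the variable gadget for x_j, and for each clause C_i, traverse exactly one of the three parallel clause edges of C_i. -/
structure LabeledGraph (V E L : Type) where
  src : E → V
  tgt : E → V
  lab : E → L

variable {V E L : Type}

def IsWalk (G : LabeledGraph V E L) : V → V → List E → Prop
  | s, t, [] => s = t
  | s, t, e :: es => G.src e = s ∧ IsWalk G (G.tgt e) t es

def Feasible (G : LabeledGraph V E L) (p : List E) : Prop :=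
  (p.map G.lab).Nodup

/-! ## The 3-SAT to SPUL reduction graph

A 3-SAT instance with `n` variables and `m` clauses is given by
`C : Fin m → Fin 3 → Fin n × Bool`, where `C i k = (j, b)` means the `k`-th
literal of clause `C_i` is variable `x_j` with polarity `b`
(`b = true` : positive literal `x_j`; `b = false` : negated literal `¬x_j`). -/

/-- The list of occurrences (clause index, position) of the literal `(j, b)`. -/
def occList {n m : ℕ} (C : Fin m → Fin 3 → Fin n × Bool) (j : Fin n) (b : Bool) :
    List (Fin m × Fin 3) :=
  ((List.finRange m) ×ˢ (List.finRange 3)).filter (fun q => C q.1 q.2 = (j, b))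

/-- Number of edges of the branch of the variable gadget for `x_j` carrying
polarity `b`: one edge per occurrence of the literal `(j, b)` in the clauses,
or a single (dummy-labeled) edge if the literal does not occur. -/
def branchLen {n m : ℕ} (C : Fin m → Fin 3 → Fin n × Bool) (j : Fin n) (b : Bool) : ℕ :=
  max 1 (occList C j b).length

/-- Vertices of the reduction graph: the junction vertices
`s = u_0, u_1, …, u_n = w_0, w_1, …, w_m = t` (as `Fin (n+m+1)`, where `u_j` is
junction `j` and `w_i` is junction `n + i`), together with internal vertices of
the variable-gadget branches. -/
abbrev RedV {n m : ℕ} (C : Fin m → Fin 3 → Fin n × Bool) : Type :=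
  Fin (n + m + 1) ⊕ (Σ j : Fin n, Σ b : Bool, Fin (branchLen C j b))

/-- Edges of the reduction graph: `inl ⟨j, b, r⟩` is the `r`-th edge of the
branch of variable gadget `x_j` with polarity `b`; `inr (i, k)` is the clause
edge for the `k`-th literal of clause `C_i`. -/
abbrev RedE {n m : ℕ} (C : Fin m → Fin 3 → Fin n × Bool) : Type :=
  (Σ j : Fin n, Σ b : Bool, Fin (branchLen C j b)) ⊕ (Fin m × Fin 3)

/-- Labels: `inl (i, k)` identifies the occurrence of a literal at position `k`
of clause `C_i` (this label appears both on the corresponding variable-branch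
edge and on the corresponding clause edge); `inr (j, b)` is the dummy label for
the branch of a literal occurring in no clause. -/
abbrev RedL (n m : ℕ) : Type := (Fin m × Fin 3) ⊕ (Fin n × Bool)

/-- The reduction graph: in series, for each variable `x_j` two parallel
branches from `u_{j-1}` to `u_j` (the branch of polarity `b` being a directed
path whose edges carry the labels of the occurrences of literal `(j, b)`),
followed by, for each clause `C_i`, three parallel edges from `w_{i-1}` to
`w_i` labeled by the three literal occurrences of `C_i`. -/
def redGraph (n m : ℕ) (C : Fin m → Fin 3 → Fin n × Bool) :
    LabeledGraph (RedV C) (RedE C) (RedL n m) where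
  src e :=
    match e with
    | Sum.inl ⟨j, b, r⟩ =>
        if r.val = 0 then Sum.inl ⟨j.val, by have := j.isLt; omega⟩
        else Sum.inr ⟨j, b, ⟨r.val - 1, by have := r.isLt; omega⟩⟩
    | Sum.inr (i, _) => Sum.inl ⟨n + i.val, by have := i.isLt; omega⟩
  tgt e :=
    match e with
    | Sum.inl ⟨j, b, r⟩ =>
        if r.val = branchLen C j b - 1 then Sum.inl ⟨j.val + 1, by have := j.isLt; omega⟩
        else Sum.inr ⟨j, b, r⟩
    | Sum.inr (i, _) => Sum.inl ⟨n + i.val + 1, by have := i.isLt; omega⟩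
  lab e :=
    match e with
    | Sum.inl ⟨j, b, r⟩ =>
        if h : occList C j b = [] then Sum.inr (j, b)
        else Sum.inl ((occList C j b).getD r.val ((occList C j b).head h))
    | Sum.inr q => Sum.inl q

/-- Start vertex `s = u_0`. -/
def redS (n m : ℕ) (C : Fin m → Fin 3 → Fin n × Bool) : RedV C :=
  Sum.inl ⟨0, by omega⟩

/-- Target vertex `t = w_m`. -/
def redT (n m : ℕ) (C : Fin m → Fin 3 → Fin n × Bool) : RedV C :=
  Sum.inl ⟨n + m, by omega⟩


section Aux

variable {n m : ℕ} {C : Fin m → Fin 3 → Fin n × Bool}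

lemma branchLen_pos (j : Fin n) (b : Bool) : 1 ≤ branchLen C j b :=
  Nat.le_max_left _ _

lemma inl_edge_inj {j j' : Fin n} {b b' : Bool} {r : Fin (branchLen C j b)}
    {r' : Fin (branchLen C j' b')}
    (h : (Sum.inl ⟨j, b, r⟩ : RedE C) = Sum.inl ⟨j', b', r'⟩) :
    j = j' ∧ b = b' ∧ r.val = r'.val := by
  injection h with h
  injection h with h1 h2
  subst h1
  injection eq_of_heq h2 with h3 h4
  subst h3
  exact ⟨rfl, rfl, congrArg Fin.val (eq_of_heq h4)⟩

lemma inl_edge_ext {j : Fin n} {b : Bool} {r r' : Fin (branchLen C j b)} (h : r.val = r'.val) :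
    (Sum.inl ⟨j, b, r⟩ : RedE C) = Sum.inl ⟨j, b, r'⟩ := by
  have : r = r' := Fin.val_injective h
  rw [this]

/-- The invariant carried along the walk: at vertex `s`, the edges strictly
"behind" `s` do not occur in the remaining walk `p`, and the remaining walk
contains exactly one full branch of every variable gadget not yet passed and
exactly one clause edge of every clause not yet passed. -/
def Q (p : List (RedE C)) : RedV C → Prop
  | Sum.inl v =>
      (∀ (j : Fin n) (b : Bool) (r : Fin (branchLen C j b)),
          j.val < v.val → Sum.inl ⟨j, b, r⟩ ∉ p) ∧
      (∀ j : Fin n, v.val ≤ j.val → ∃ b : Bool,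
          (∀ r, Sum.inl ⟨j, b, r⟩ ∈ p) ∧ (∀ r, Sum.inl ⟨j, !b, r⟩ ∉ p)) ∧
      (∀ (i : Fin m) (k : Fin 3), n + i.val < v.val → Sum.inr (i, k) ∉ p) ∧
      (∀ i : Fin m, v.val ≤ n + i.val → ∃! k : Fin 3, Sum.inr (i, k) ∈ p)
  | Sum.inr ⟨j0, b0, r0⟩ =>
      (∀ (j : Fin n) (b : Bool) (r : Fin (branchLen C j b)),
          (j.val < j0.val ∨ (j.val = j0.val ∧ b ≠ b0)) → Sum.inl ⟨j, b, r⟩ ∉ p) ∧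
      (∀ r : Fin (branchLen C j0 b0), r0.val < r.val → Sum.inl ⟨j0, b0, r⟩ ∈ p) ∧
      (∀ j : Fin n, j0.val < j.val → ∃ b : Bool,
          (∀ r, Sum.inl ⟨j, b, r⟩ ∈ p) ∧ (∀ r, Sum.inl ⟨j, !b, r⟩ ∉ p)) ∧
      (∀ i : Fin m, ∃! k : Fin 3, Sum.inr (i, k) ∈ p)

lemma walk_Q : ∀ (p : List (RedE C)) (s : RedV C),
    IsWalk (redGraph n m C) s (redT n m C) p → Q p s := by
  intro p
  induction p with
  | nil =>
    intro s h
    have hs : s = redT n m C := h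
    subst hs
    refine ⟨?_, ?_, ?_, ?_⟩
    · intro j b r _ hm; simp at hm
    · intro j hj
      exact absurd hj (by show ¬ n + m ≤ j.val; have := j.isLt; omega)
    · intro i k _ hm; simp at hm
    · intro i hi
      exact absurd hi (by show ¬ n + m ≤ n + i.val; have := i.isLt; omega)
  | cons e es ih =>
    intro s h
    obtain ⟨hsrc, htail⟩ := h
    rcases s with v | ⟨j0, b0, r0⟩
    · -- start at a junction vertex
      rcases e with ⟨j', b, r⟩ | ⟨i0, k0⟩
      · -- branch edge
        simp only [redGraph] at hsrc htail
        by_cases hr0 : r.val = 0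
        · rw [if_pos hr0] at hsrc
          have hv : v.val = j'.val := by
            injection hsrc with h'
            rw [← h']
          have hlb := branchLen_pos (C := C) j' b
          by_cases hlast : r.val = branchLen C j' b - 1
          · -- branch of length one: next vertex is junction j'+1
            rw [if_pos hlast] at htail
            obtain ⟨E1, P1, E2, P2⟩ := ih _ htail
            have hlen1 : branchLen C j' b = 1 := by omega
            refine ⟨?_, ?_, ?_, ?_⟩
            · intro j bb rr hj hm
              rcases List.mem_cons.mp hm with heq | hmem
              · obtain ⟨h1, -, -⟩ := inl_edge_inj heq
                subst h1; omega
              · exact E1 j bb rr (by show j.val < j'.val + 1; omega) hmem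
            · intro j hj
              by_cases hjj : j.val = j'.val
              · have hje : j = j' := Fin.val_injective hjj
                subst hje
                refine ⟨b, ?_, ?_⟩
                · intro rr
                  have : rr.val = r.val := by have := rr.isLt; omega
                  rw [inl_edge_ext this]
                  exact List.mem_cons_self
                · intro rr hm
                  rcases List.mem_cons.mp hm with heq | hmem
                  · obtain ⟨-, h2, -⟩ := inl_edge_inj heq
                    simp at h2
                  · exact E1 j (!b) rr (by show j.val < j.val + 1; omega) hmem
              · obtain ⟨bb, hin, hout⟩ := P1 j (by show j'.val + 1 ≤ j.val; omega)
                refine ⟨bb, fun rr => List.mem_cons_of_mem _ (hin rr), ?_⟩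
                intro rr hm
                rcases List.mem_cons.mp hm with heq | hmem
                · obtain ⟨h1, -, -⟩ := inl_edge_inj heq
                  exact hjj (congrArg Fin.val h1)
                · exact hout rr hmem
            · intro i k hik
              exact absurd hik (by have := j'.isLt; omega)
            · intro i _
              obtain ⟨k, hk, hu⟩ := P2 i (by show j'.val + 1 ≤ n + i.val; have := j'.isLt; omega)
              refine ⟨k, List.mem_cons_of_mem _ hk, ?_⟩
              intro k' hk'
              rcases List.mem_cons.mp hk' with heq | hmem
              · simp at heq
              · exact hu k' hmem
          · -- next vertex is first internal vertex of branch
            rw [if_neg hlast] at htail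
            obtain ⟨E1, P1, P1', P2⟩ := ih _ htail
            refine ⟨?_, ?_, ?_, ?_⟩
            · intro j bb rr hj hm
              rcases List.mem_cons.mp hm with heq | hmem
              · obtain ⟨h1, -, -⟩ := inl_edge_inj heq
                subst h1; omega
              · exact E1 j bb rr (Or.inl (by omega)) hmem
            · intro j hj
              by_cases hjj : j.val = j'.val
              · have hje : j = j' := Fin.val_injective hjj
                subst hje
                refine ⟨b, ?_, ?_⟩
                · intro rr
                  by_cases hrr : rr.val = 0
                  · rw [inl_edge_ext (by omega : rr.val = r.val)]
                    exact List.mem_cons_self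
                  · exact List.mem_cons_of_mem _ (P1 rr (by omega))
                · intro rr hm
                  rcases List.mem_cons.mp hm with heq | hmem
                  · obtain ⟨-, h2, -⟩ := inl_edge_inj heq
                    simp at h2
                  · exact E1 j (!b) rr (Or.inr ⟨rfl, by simp⟩) hmem
              · obtain ⟨bb, hin, hout⟩ := P1' j (by omega)
                refine ⟨bb, fun rr => List.mem_cons_of_mem _ (hin rr), ?_⟩
                intro rr hm
                rcases List.mem_cons.mp hm with heq | hmem
                · obtain ⟨h1, -, -⟩ := inl_edge_inj heq
                  exact hjj (congrArg Fin.val h1)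
                · exact hout rr hmem
            · intro i k hik
              exact absurd hik (by have := j'.isLt; omega)
            · intro i _
              obtain ⟨k, hk, hu⟩ := P2 i
              refine ⟨k, List.mem_cons_of_mem _ hk, ?_⟩
              intro k' hk'
              rcases List.mem_cons.mp hk' with heq | hmem
              · simp at heq
              · exact hu k' hmem
        · rw [if_neg hr0] at hsrc
          simp at hsrc
      · -- clause edge
        simp only [redGraph] at hsrc htail
        have hv : v.val = n + i0.val := by
          injection hsrc with h'
          rw [← h']
        obtain ⟨E1, P1, E2, P2⟩ := ih _ htail
        refine ⟨?_, ?_, ?_, ?_⟩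
        · intro j bb rr hj hm
          rcases List.mem_cons.mp hm with heq | hmem
          · simp at heq
          · exact E1 j bb rr (by show j.val < n + i0.val + 1; omega) hmem
        · intro j hj
          exact absurd hj (by have := j.isLt; omega)
        · intro i k hik hm
          rcases List.mem_cons.mp hm with heq | hmem
          · injection heq with h'
            have : i = i0 := congrArg Prod.fst h'
            subst this; omega
          · exact E2 i k (by show n + i.val < n + i0.val + 1; omega) hmem
        · intro i hi
          by_cases hii : i.val = i0.val
          · have hie : i = i0 := Fin.val_injective hii
            subst hie
            refine ⟨k0, List.mem_cons_self, ?_⟩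
            intro k' hk'
            rcases List.mem_cons.mp hk' with heq | hmem
            · injection heq with h'
              exact congrArg Prod.snd h'
            · exact absurd hmem (E2 i k' (by show n + i.val < n + i.val + 1; omega))
          · obtain ⟨k, hk, hu⟩ := P2 i (by show n + i0.val + 1 ≤ n + i.val; omega)
            refine ⟨k, List.mem_cons_of_mem _ hk, ?_⟩
            intro k' hk'
            rcases List.mem_cons.mp hk' with heq | hmem
            · injection heq with h'
              exact absurd (congrArg (fun q => q.1.val) h') hii
            · exact hu k' hmem
    · -- start at an internal vertex of the branch (j0, b0), after edge r0
      rcases e with ⟨j, b, r⟩ | ⟨i0, k0⟩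
      · simp only [redGraph] at hsrc htail
        by_cases hr0 : r.val = 0
        · rw [if_pos hr0] at hsrc
          simp at hsrc
        · rw [if_neg hr0] at hsrc
          injection hsrc with h'
          injection h' with h1 h2
          subst h1
          injection eq_of_heq h2 with h3 h4
          subst h3
          have hr0v : r0.val = r.val - 1 := (congrArg Fin.val (eq_of_heq h4)).symm
          have hlb := branchLen_pos (C := C) j b
          by_cases hlast : r.val = branchLen C j b - 1
          · rw [if_pos hlast] at htail
            obtain ⟨E1, P1, E2, P2⟩ := ih _ htail
            refine ⟨?_, ?_, ?_, ?_⟩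
            · intro j' bb rr hcond hm
              rcases List.mem_cons.mp hm with heq | hmem
              · obtain ⟨h5, h6, -⟩ := inl_edge_inj heq
                subst h5; subst h6
                rcases hcond with h' | ⟨-, h'⟩
                · omega
                · exact h' rfl
              · refine E1 j' bb rr ?_ hmem
                show j'.val < j.val + 1
                rcases hcond with h' | ⟨h', -⟩ <;> omega
            · intro rr hrr
              have hrv : rr.val = r.val := by have := rr.isLt; omega
              rw [inl_edge_ext hrv]
              exact List.mem_cons_self
            · intro j' hj'
              obtain ⟨bb, hin, hout⟩ := P1 j' (by show j.val + 1 ≤ j'.val; omega)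
              refine ⟨bb, fun rr => List.mem_cons_of_mem _ (hin rr), ?_⟩
              intro rr hm
              rcases List.mem_cons.mp hm with heq | hmem
              · obtain ⟨h5, -, -⟩ := inl_edge_inj heq
                subst h5; omega
              · exact hout rr hmem
            · intro i
              obtain ⟨k, hk, hu⟩ := P2 i (by show j.val + 1 ≤ n + i.val; have := j.isLt; omega)
              refine ⟨k, List.mem_cons_of_mem _ hk, ?_⟩
              intro k' hk'
              rcases List.mem_cons.mp hk' with heq | hmem
              · simp at heq
              · exact hu k' hmem
          · rw [if_neg hlast] at htail
            obtain ⟨E1, P1, P1', P2⟩ := ih _ htail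
            refine ⟨?_, ?_, ?_, ?_⟩
            · intro j' bb rr hcond hm
              rcases List.mem_cons.mp hm with heq | hmem
              · obtain ⟨h5, h6, -⟩ := inl_edge_inj heq
                subst h5; subst h6
                rcases hcond with h' | ⟨-, h'⟩
                · omega
                · exact h' rfl
              · exact E1 j' bb rr hcond hmem
            · intro rr hrr
              by_cases hrv : rr.val = r.val
              · rw [inl_edge_ext hrv]
                exact List.mem_cons_self
              · exact List.mem_cons_of_mem _ (P1 rr (by omega))
            · intro j' hj'
              obtain ⟨bb, hin, hout⟩ := P1' j' hj'
              refine ⟨bb, fun rr => List.mem_cons_of_mem _ (hin rr), ?_⟩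
              intro rr hm
              rcases List.mem_cons.mp hm with heq | hmem
              · obtain ⟨h5, -, -⟩ := inl_edge_inj heq
                subst h5; omega
              · exact hout rr hmem
            · intro i
              obtain ⟨k, hk, hu⟩ := P2 i
              refine ⟨k, List.mem_cons_of_mem _ hk, ?_⟩
              intro k' hk'
              rcases List.mem_cons.mp hk' with heq | hmem
              · simp at heq
              · exact hu k' hmem
      · simp only [redGraph] at hsrc
        simp at hsrc

end Aux

/-- Every `s`-`t` path in the reduction graph traverses, for each variable
`x_j`, exactly one of the two branches of its variable gadget (all edges of one
branch and no edge of the other), and, for each clause `C_i`, exactly one of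
its three parallel clause edges. -/
theorem redGraph_path_structure (n m : ℕ) (C : Fin m → Fin 3 → Fin n × Bool)
    (p : List (RedE C))
    (hwalk : IsWalk (redGraph n m C) (redS n m C) (redT n m C) p) :
    (∀ j : Fin n, ∃ b : Bool,
        (∀ r : Fin (branchLen C j b), Sum.inl ⟨j, b, r⟩ ∈ p) ∧
        (∀ r : Fin (branchLen C j (!b)), Sum.inl ⟨j, !b, r⟩ ∉ p)) ∧
    (∀ i : Fin m, ∃! k : Fin 3, Sum.inr (i, k) ∈ p) := by
  obtain ⟨-, P1, -, P2⟩ := walk_Q p (redS n m C) hwalk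
  exact ⟨fun j => P1 j (Nat.zero_le _), fun i => P2 i (Nat.zero_le _)⟩
end

section
/- Conversely, if the 3-SAT reduction graph admits an s-t path with pairwise distinct edge labels, then the assignment σ defined by σ(x_j) = true iff the path traverses the negative branch of the variable gadget for x_j satisfies every clause of the 3-SAT instance. -/
variable {V E L : Type}

section Aux

variable {n m : ℕ} {C : Fin m → Fin 3 → Fin n × Bool}

/-- Height of a vertex: junction index, or the variable index for internal vertices. -/
def ht : RedV C → ℕ
  | Sum.inl u => u.val
  | Sum.inr ⟨j, _, _⟩ => j.val

lemma ht_src_inl (j : Fin n) (b : Bool) (r : Fin (branchLen C j b)) :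
    ht ((redGraph n m C).src (Sum.inl ⟨j, b, r⟩)) = j.val := by
  simp only [redGraph]
  split <;> rfl

lemma ht_src_inr (i : Fin m) (k : Fin 3) :
    ht ((redGraph n m C).src (Sum.inr (i, k))) = n + i.val := rfl

lemma ht_tgt_inl (j : Fin n) (b : Bool) (r : Fin (branchLen C j b)) :
    ht ((redGraph n m C).tgt (Sum.inl ⟨j, b, r⟩)) = j.val ∨
    ht ((redGraph n m C).tgt (Sum.inl ⟨j, b, r⟩)) = j.val + 1 := by
  simp only [redGraph]
  split
  · right; rfl
  · left; rfl

lemma edge_step (e : RedE C) :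
    ht ((redGraph n m C).tgt e) = ht ((redGraph n m C).src e) ∨
    ht ((redGraph n m C).tgt e) = ht ((redGraph n m C).src e) + 1 := by
  cases e with
  | inl x =>
      obtain ⟨j, b, r⟩ := x
      rw [ht_src_inl]
      exact ht_tgt_inl j b r
  | inr q =>
      obtain ⟨i, k⟩ := q
      right; rfl

lemma crossing {s t : RedV C} {p : List (RedE C)}
    (hw : IsWalk (redGraph n m C) s t p) (v : ℕ) (h1 : ht s ≤ v) (h2 : v < ht t) :
    ∃ e ∈ p, ht ((redGraph n m C).src e) = v ∧ ht ((redGraph n m C).tgt e) = v + 1 := by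
  induction p generalizing s with
  | nil =>
      simp only [IsWalk] at hw
      subst hw
      omega
  | cons e es ih =>
      obtain ⟨hsrc, hw'⟩ := hw
      by_cases hle : ht ((redGraph n m C).tgt e) ≤ v
      · obtain ⟨e', he', h⟩ := ih hw' hle
        exact ⟨e', List.mem_cons_of_mem _ he', h⟩
      · have hstep := edge_step e
        rw [hsrc] at hstep
        rcases hstep with h | h
        · omega
        · exact ⟨e, List.mem_cons_self, by rw [hsrc]; omega, by omega⟩

lemma exists_next {s t : RedV C} {p : List (RedE C)}
    (hw : IsWalk (redGraph n m C) s t p) (e : RedE C) (he : e ∈ p)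
    (hne : (redGraph n m C).tgt e ≠ t) :
    ∃ e' ∈ p, (redGraph n m C).src e' = (redGraph n m C).tgt e := by
  induction p generalizing s with
  | nil => cases he
  | cons a es ih =>
      obtain ⟨hsrc, hw'⟩ := hw
      rcases List.mem_cons.mp he with rfl | he
      · cases es with
        | nil => exact absurd hw' hne
        | cons a' es' =>
            exact ⟨a', List.mem_cons_of_mem _ (List.mem_cons_self), hw'.1⟩
      · obtain ⟨e', he', h⟩ := ih hw' he
        exact ⟨e', List.mem_cons_of_mem _ he', h⟩

lemma exists_prev {s t : RedV C} {p : List (RedE C)}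
    (hw : IsWalk (redGraph n m C) s t p) (e : RedE C) (he : e ∈ p)
    (hne : (redGraph n m C).src e ≠ s) :
    ∃ e' ∈ p, (redGraph n m C).tgt e' = (redGraph n m C).src e := by
  induction p generalizing s with
  | nil => cases he
  | cons a es ih =>
      obtain ⟨hsrc, hw'⟩ := hw
      rcases List.mem_cons.mp he with rfl | he
      · exact absurd hsrc hne
      · by_cases h : (redGraph n m C).src e = (redGraph n m C).tgt a
        · exact ⟨a, List.mem_cons_self, h.symm⟩
        · obtain ⟨e', he', h'⟩ := ih hw' he h
          exact ⟨e', List.mem_cons_of_mem _ he', h'⟩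

lemma step_up {p : List (RedE C)}
    (hw : IsWalk (redGraph n m C) (redS n m C) (redT n m C) p)
    {j : Fin n} {b : Bool} {k : ℕ} (hk : k + 1 < branchLen C j b)
    (hmem : Sum.inl ⟨j, b, ⟨k, by omega⟩⟩ ∈ p) :
    Sum.inl ⟨j, b, ⟨k + 1, hk⟩⟩ ∈ p := by
  have htgt : (redGraph n m C).tgt (Sum.inl ⟨j, b, ⟨k, by omega⟩⟩) =
      Sum.inr ⟨j, b, ⟨k, by omega⟩⟩ := by
    simp only [redGraph]
    rw [if_neg (by omega)]
  have hne : (redGraph n m C).tgt (Sum.inl ⟨j, b, ⟨k, by omega⟩⟩) ≠ redT n m C := by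
    rw [htgt]; simp [redT]
  obtain ⟨e', he', hsrc⟩ := exists_next hw _ hmem hne
  rw [htgt] at hsrc
  cases e' with
  | inl x =>
      obtain ⟨j', b', r'⟩ := x
      by_cases hr0 : r'.val = 0
      · simp only [redGraph, if_pos hr0] at hsrc
        exact absurd hsrc (by simp)
      · simp only [redGraph, if_neg hr0, Sum.inr.injEq] at hsrc
        obtain ⟨rfl, hsrc⟩ := Sigma.mk.inj_iff.mp hsrc
        obtain ⟨rfl, hsrc⟩ := Sigma.mk.inj_iff.mp (eq_of_heq hsrc)
        have hval : r'.val - 1 = k := congrArg Fin.val (eq_of_heq hsrc)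
        have : r' = ⟨k + 1, hk⟩ := by
          apply Fin.ext; simp only []; omega
        rw [this] at he'
        exact he'
  | inr q =>
      obtain ⟨i, kk⟩ := q
      simp only [redGraph] at hsrc
      cases hsrc

lemma step_down {p : List (RedE C)}
    (hw : IsWalk (redGraph n m C) (redS n m C) (redT n m C) p)
    {j : Fin n} {b : Bool} {k : ℕ} (hk : k + 1 < branchLen C j b)
    (hmem : Sum.inl ⟨j, b, ⟨k + 1, hk⟩⟩ ∈ p) :
    Sum.inl ⟨j, b, ⟨k, by omega⟩⟩ ∈ p := by
  have hsrc : (redGraph n m C).src (Sum.inl ⟨j, b, ⟨k + 1, hk⟩⟩) =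
      Sum.inr ⟨j, b, ⟨k, by omega⟩⟩ := by
    simp only [redGraph]
    rw [if_neg (by omega)]
    simp
  have hne : (redGraph n m C).src (Sum.inl ⟨j, b, ⟨k + 1, hk⟩⟩) ≠ redS n m C := by
    rw [hsrc]; simp [redS]
  obtain ⟨e', he', htgt⟩ := exists_prev hw _ hmem hne
  rw [hsrc] at htgt
  cases e' with
  | inl x =>
      obtain ⟨j', b', r'⟩ := x
      by_cases hrl : r'.val = branchLen C j' b' - 1
      · simp only [redGraph, if_pos hrl] at htgt
        exact absurd htgt (by simp)
      · simp only [redGraph, if_neg hrl, Sum.inr.injEq] at htgt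
        obtain ⟨rfl, htgt⟩ := Sigma.mk.inj_iff.mp htgt
        obtain ⟨rfl, htgt⟩ := Sigma.mk.inj_iff.mp (eq_of_heq htgt)
        have hval : r'.val = k := congrArg Fin.val (eq_of_heq htgt)
        have : r' = ⟨k, by omega⟩ := Fin.ext hval
        rw [this] at he'
        exact he'
  | inr q =>
      obtain ⟨i, kk⟩ := q
      simp only [redGraph] at htgt
      cases htgt

lemma branch_all {p : List (RedE C)}
    (hw : IsWalk (redGraph n m C) (redS n m C) (redT n m C) p)
    {j : Fin n} {b : Bool} {r : Fin (branchLen C j b)}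
    (hr : Sum.inl ⟨j, b, r⟩ ∈ p) (r' : Fin (branchLen C j b)) :
    Sum.inl ⟨j, b, r'⟩ ∈ p := by
  have down : ∀ k : ℕ, ∀ h : k < branchLen C j b,
      Sum.inl ⟨j, b, ⟨k, h⟩⟩ ∈ p → Sum.inl ⟨j, b, ⟨0, by omega⟩⟩ ∈ p := by
    intro k
    induction k with
    | zero => intro h hm; exact hm
    | succ k ih =>
        intro h hm
        exact ih (by omega) (step_down hw h hm)
  have up : ∀ k : ℕ, ∀ h : k < branchLen C j b,
      Sum.inl ⟨j, b, ⟨0, by omega⟩⟩ ∈ p → Sum.inl ⟨j, b, ⟨k, h⟩⟩ ∈ p := by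
    intro k
    induction k with
    | zero => intro h hm; exact hm
    | succ k ih =>
        intro h hm
        exact step_up hw h (ih (by omega) hm)
  have h0 := down r.val r.isLt hr
  exact up r'.val r'.isLt h0

lemma mem_occList {i : Fin m} {k : Fin 3} {j : Fin n} {b : Bool}
    (h : C i k = (j, b)) : (i, k) ∈ occList C j b := by
  simp [occList, List.mem_filter, h]

lemma lab_branch {j : Fin n} {b : Bool} (i : Fin m) (k : Fin 3) (h : C i k = (j, b)) :
    ∃ r : Fin (branchLen C j b),
      (redGraph n m C).lab (Sum.inl ⟨j, b, r⟩) = Sum.inl (i, k) := by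
  have hm := mem_occList h
  have hne : occList C j b ≠ [] := List.ne_nil_of_mem hm
  have hlen : 0 < (occList C j b).length := List.length_pos_iff.mpr hne
  have hbl : branchLen C j b = (occList C j b).length := by
    simp only [branchLen]; omega
  obtain ⟨r0, hr0, hget⟩ := List.mem_iff_getElem.mp hm
  refine ⟨⟨r0, by omega⟩, ?_⟩
  simp only [redGraph]
  rw [dif_neg hne]
  rw [List.getD_eq_getElem _ _ (by simpa using hr0), hget]

end Aux

/-- Conversely: if the reduction graph admits an `s`-`t` path with pairwise
distinct edge labels, then the assignment `σ`, defined by `σ x_j = true` iff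
the path traverses (some edge of) the negative branch (polarity `false`) of the
variable gadget for `x_j`, satisfies every clause. -/
theorem redGraph_feasible_path_implies_satisfiable (n m : ℕ)
    (C : Fin m → Fin 3 → Fin n × Bool) (p : List (RedE C))
    (hwalk : IsWalk (redGraph n m C) (redS n m C) (redT n m C) p)
    (hfeas : Feasible (redGraph n m C) p)
    (σ : Fin n → Bool)
    (hσ : ∀ j : Fin n,
      σ j = true ↔ ∃ r : Fin (branchLen C j false), Sum.inl ⟨j, false, r⟩ ∈ p) :
    ∀ i : Fin m, ∃ k : Fin 3, σ (C i k).1 = (C i k).2 := by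
  intro i
  -- Step A: the path contains a clause edge for clause i.
  have hScross : ht (redS n m C) ≤ n + i.val := by simp [redS, ht]
  have hTcross : n + i.val < ht (redT n m C) := by
    have := i.isLt
    simp only [redT, ht]
    omega
  obtain ⟨e, hep, hes, -⟩ := crossing hwalk (n + i.val) hScross hTcross
  obtain ⟨k, rfl⟩ : ∃ k, e = Sum.inr (i, k) := by
    cases e with
    | inl x =>
        obtain ⟨j, b, r⟩ := x
        rw [ht_src_inl] at hes
        have := j.isLt
        omega
    | inr q =>
        obtain ⟨i', k⟩ := q
        rw [ht_src_inr] at hes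
        have : i' = i := Fin.ext (by omega)
        exact ⟨k, by rw [this]⟩
  refine ⟨k, ?_⟩
  obtain ⟨j, b, hC⟩ : ∃ j b, C i k = (j, b) := ⟨(C i k).1, (C i k).2, rfl⟩
  rw [hC]
  -- No edge of branch (j, b) occurs in p.
  have hno : ∀ r : Fin (branchLen C j b), Sum.inl ⟨j, b, r⟩ ∉ p := by
    intro r hr
    obtain ⟨r0, hr0⟩ := lab_branch (C := C) i k hC
    have hmem0 : (Sum.inl ⟨j, b, r0⟩ : RedE C) ∈ p := branch_all hwalk hr r0
    have hlab2 : (redGraph n m C).lab (Sum.inr (i, k)) = Sum.inl (i, k) := rfl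
    have hinj := List.inj_on_of_nodup_map hfeas
    have := hinj hmem0 hep (by rw [hr0, hlab2])
    simp at this
  -- Crossing at level j: some branch edge of variable j is in p.
  have hjlt : (j : ℕ) < n + m := by have := j.isLt; omega
  obtain ⟨e', hep', hes', -⟩ := crossing hwalk j.val (by simp [redS, ht]) (by simpa [redT, ht])
  obtain ⟨b', r', he'⟩ : ∃ b', ∃ r' : Fin (branchLen C j b'), e' = Sum.inl ⟨j, b', r'⟩ := by
    cases e' with
    | inl x =>
        obtain ⟨j', b', r'⟩ := x
        rw [ht_src_inl] at hes'
        have : j' = j := Fin.ext hes'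
        subst this
        exact ⟨b', r', rfl⟩
    | inr q =>
        obtain ⟨i', k'⟩ := q
        rw [ht_src_inr] at hes'
        have := j.isLt
        omega
  subst he'
  have hbb : b' ≠ b := by
    rintro rfl
    exact hno r' hep'
  cases b with
  | false =>
      -- σ j must be false: no false-branch edge of j is in p.
      cases hσj : σ j with
      | false => rfl
      | true =>
          obtain ⟨r, hr⟩ := (hσ j).mp hσj
          exact absurd hr (hno r)
  | true =>
      -- b' = false, so the path uses the false branch: σ j = true.
      have hb' : b' = false := by
        cases b' with
        | false => rfl
        | true => exact absurd rfl hbb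
      subst hb'
      exact (hσ j).mpr ⟨r', hep'⟩
end
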